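/- Let k ≥ 2 and n ≥ 1 be integers, and let X be a set with kn elements partitioned into two color classes X₁ and X₂, each containing at least n elements. Then X admits a partition into n pairwise disjoint 2-colorful k-tuples; that is, X can be partitioned into n subsets, each of size k and each containing at least one element of X₁ and at least one element of X₂. -/

import Mathlib

lemma two_color_aux {α : Type*} [DecidableEq α] (k : ℕ) (hk : 2 ≤ k) :
    ∀ n (X₁ X₂ : Finset α), Disjoint X₁ X₂ → X₁.card + X₂.card = k * n →
      n ≤ X₁.card → n ≤ X₂.card →
      ∃ P : Fin n → Finset α,
        (∀ i j, i ≠ j → Disjoint (P i) (P j)) ∧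
        Finset.univ.biUnion P = X₁ ∪ X₂ ∧
        (∀ i, (P i).card = k) ∧
        (∀ i, ((P i) ∩ X₁).Nonempty ∧ ((P i) ∩ X₂).Nonempty) := by
  intro n
  induction n with
  | zero =>
    intro X₁ X₂ hd hc h1 h2
    have e1 : X₁ = ∅ := Finset.card_eq_zero.mp (by omega)
    have e2 : X₂ = ∅ := Finset.card_eq_zero.mp (by omega)
    exact ⟨fun i => i.elim0, fun i => i.elim0, by simp [e1, e2],
      fun i => i.elim0, fun i => i.elim0⟩
  | succ n ih =>
    intro X₁ X₂ hd hc h1 h2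
    have hmul : k * (n + 1) = k * n + k := by ring
    have h2n : 2 * n ≤ k * n := Nat.mul_le_mul_right n hk
    set a := min (k - 1) (X₁.card - n) with ha
    have ha1 : 1 ≤ a := by omega
    have haX : a ≤ X₁.card := by omega
    have hb1 : 1 ≤ k - a := by omega
    have hbX : k - a ≤ X₂.card := by omega
    obtain ⟨S₁, hS₁sub, hS₁card⟩ := Finset.exists_subset_card_eq haX
    obtain ⟨S₂, hS₂sub, hS₂card⟩ := Finset.exists_subset_card_eq hbX
    have hc1 : (X₁ \ S₁).card = X₁.card - a := by rw [Finset.card_sdiff_of_subset hS₁sub, hS₁card]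
    have hc2 : (X₂ \ S₂).card = X₂.card - (k - a) := by rw [Finset.card_sdiff_of_subset hS₂sub, hS₂card]
    have hd' : Disjoint (X₁ \ S₁) (X₂ \ S₂) :=
      hd.mono (Finset.sdiff_subset) (Finset.sdiff_subset)
    obtain ⟨P', hP'd, hP'u, hP'c, hP'col⟩ :=
      ih (X₁ \ S₁) (X₂ \ S₂) hd' (by omega) (by omega) (by omega)
    -- disjointness of the new block from the rest
    have hS12d : Disjoint S₁ S₂ := hd.mono hS₁sub hS₂sub
    have hnewd : Disjoint (S₁ ∪ S₂) ((X₁ \ S₁) ∪ (X₂ \ S₂)) := by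
      refine Finset.disjoint_union_left.mpr ⟨?_, ?_⟩ <;>
        refine Finset.disjoint_union_right.mpr ⟨?_, ?_⟩
      · exact Finset.disjoint_sdiff
      · exact (hd.mono hS₁sub Finset.sdiff_subset)
      · exact ((hd.symm).mono hS₂sub Finset.sdiff_subset)
      · exact Finset.disjoint_sdiff
    have hPsub : ∀ i, P' i ⊆ (X₁ \ S₁) ∪ (X₂ \ S₂) := by
      intro i
      rw [← hP'u]
      exact Finset.subset_biUnion_of_mem P' (Finset.mem_univ i)
    refine ⟨Fin.cons (S₁ ∪ S₂) P', ?_, ?_, ?_, ?_⟩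
    · intro i j hij
      induction i using Fin.cases with
      | zero =>
        induction j using Fin.cases with
        | zero => exact absurd rfl hij
        | succ j' => simpa using hnewd.mono_right (hPsub j')
      | succ i' =>
        induction j using Fin.cases with
        | zero => simpa using (hnewd.mono_right (hPsub i')).symm
        | succ j' =>
          have hne : i' ≠ j' := fun h => hij (by rw [h])
          simpa using hP'd i' j' hne
    · have hstep : Finset.univ.biUnion (Fin.cons (S₁ ∪ S₂) P' : Fin (n+1) → Finset α)
          = (S₁ ∪ S₂) ∪ Finset.univ.biUnion P' := by
        ext x
        simp only [Finset.mem_biUnion, Finset.mem_univ, true_and, Finset.mem_union,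
          Fin.exists_fin_succ, Fin.cons_zero, Fin.cons_succ]
      rw [hstep, hP'u]
      ext x
      simp only [Finset.mem_union, Finset.mem_sdiff]
      have hx1 := @hS₁sub x
      have hx2 := @hS₂sub x
      constructor
      · tauto
      · intro h
        by_cases hxS1 : x ∈ S₁ <;> by_cases hxS2 : x ∈ S₂ <;> tauto
    · intro i
      induction i using Fin.cases with
      | zero =>
        simp only [Fin.cons_zero]
        rw [Finset.card_union_of_disjoint hS12d, hS₁card, hS₂card]
        omega
      | succ i' => simpa using hP'c i'
    · intro i
      induction i using Fin.cases with
      | zero =>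
        constructor
        · obtain ⟨x, hx⟩ := Finset.card_pos.mp (by rw [hS₁card]; omega : 0 < S₁.card)
          exact ⟨x, Finset.mem_inter.mpr ⟨by simp [hx], hS₁sub hx⟩⟩
        · obtain ⟨x, hx⟩ := Finset.card_pos.mp (by rw [hS₂card]; omega : 0 < S₂.card)
          exact ⟨x, Finset.mem_inter.mpr ⟨by simp [hx], hS₂sub hx⟩⟩
      | succ i' =>
        obtain ⟨c1, c2⟩ := hP'col i'
        constructor
        · refine c1.mono ?_
          simp only [Fin.cons_succ]
          exact Finset.inter_subset_inter (le_refl _) Finset.sdiff_subset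
        · refine c2.mono ?_
          simp only [Fin.cons_succ]
          exact Finset.inter_subset_inter (le_refl _) Finset.sdiff_subset

theorem two_color_combinatorial_partition
    {α : Type*} [DecidableEq α] (k n : ℕ) (hk : 2 ≤ k) (hn : 1 ≤ n)
    (X X₁ X₂ : Finset α)
    (hdisj : Disjoint X₁ X₂) (hX : X = X₁ ∪ X₂)
    (hcard : X.card = k * n)
    (h1 : n ≤ X₁.card) (h2 : n ≤ X₂.card) :
    ∃ P : Fin n → Finset α,
      (∀ i j, i ≠ j → Disjoint (P i) (P j)) ∧
      Finset.univ.biUnion P = X ∧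
      (∀ i, (P i).card = k) ∧
      (∀ i, ((P i) ∩ X₁).Nonempty ∧ ((P i) ∩ X₂).Nonempty) := by
  have hsum : X₁.card + X₂.card = k * n := by
    rw [← Finset.card_union_of_disjoint hdisj, ← hX, hcard]
  obtain ⟨P, hPd, hPu, hPc, hPcol⟩ := two_color_aux k hk n X₁ X₂ hdisj hsum h1 h2
  exact ⟨P, hPd, by rw [hPu, hX], hPc, hPcol⟩
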